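/- arXiv:1607.07749 — 4 statements merged into one kernel-verified Lean document; each statement's English description precedes it below -/
import Mathlib

section
/- Symmetry of the second geometric divided difference: let f be a function from positive reals to positive reals and let x₀, x₁, x₂ > 0 have pairwise distinct logarithms. With first geometric divided differences f(xᵢ,xⱼ) = (f(xⱼ)/f(xᵢ))^{1/(ln xⱼ − ln xᵢ)}, the second geometric divided difference satisfies ( f(x₁,x₂)/f(x₀,x₁) )^{1/(ln x₂ − ln x₀)} = f(x₀)^{1/((ln x₀ − ln x₁)(ln x₀ − ln x₂))} · f(x₁)^{1/((ln x₁ − ln x₀)(ln x₁ − ln x₂))} · f(x₂)^{1/((ln x₂ − ln x₀)(ln x₂ − ln x₁))}; in particular it is symmetric in x₀, x₁, x₂. -/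
/-- The first geometric divided difference of `f` at arguments `a, b`:
`f(a,b) = (f b / f a) ^ (1 / (ln b - ln a))`. -/
noncomputable def gDD₁ (f : ℝ → ℝ) (a b : ℝ) : ℝ :=
  (f b / f a) ^ (1 / (Real.log b - Real.log a))

/-- Symmetry of the second geometric divided difference: at arguments `x₀, x₁, x₂`
with pairwise distinct logarithms, the second geometric divided difference equals
the symmetric product
`∏ᵢ f xᵢ ^ (1 / ∏_{j≠i} (ln xᵢ - ln xⱼ))`. -/
theorem second_geometric_divided_difference_symmetric
    (f : ℝ → ℝ) (hf : ∀ t : ℝ, 0 < t → 0 < f t)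
    (x₀ x₁ x₂ : ℝ) (h₀ : 0 < x₀) (h₁ : 0 < x₁) (h₂ : 0 < x₂)
    (h01 : Real.log x₀ ≠ Real.log x₁) (h02 : Real.log x₀ ≠ Real.log x₂)
    (h12 : Real.log x₁ ≠ Real.log x₂) :
    (gDD₁ f x₁ x₂ / gDD₁ f x₀ x₁) ^ (1 / (Real.log x₂ - Real.log x₀))
      = f x₀ ^ (1 / ((Real.log x₀ - Real.log x₁) * (Real.log x₀ - Real.log x₂)))
        * f x₁ ^ (1 / ((Real.log x₁ - Real.log x₀) * (Real.log x₁ - Real.log x₂)))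
        * f x₂ ^ (1 / ((Real.log x₂ - Real.log x₀) * (Real.log x₂ - Real.log x₁))) := by
  have hf0 := hf x₀ h₀
  have hf1 := hf x₁ h₁
  have hf2 := hf x₂ h₂
  have hg01 : 0 < gDD₁ f x₀ x₁ := Real.rpow_pos_of_pos (div_pos hf1 hf0) _
  have hg12 : 0 < gDD₁ f x₁ x₂ := Real.rpow_pos_of_pos (div_pos hf2 hf1) _
  have hL : 0 < (gDD₁ f x₁ x₂ / gDD₁ f x₀ x₁) ^ (1 / (Real.log x₂ - Real.log x₀)) :=
    Real.rpow_pos_of_pos (div_pos hg12 hg01) _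
  have hR : 0 < f x₀ ^ (1 / ((Real.log x₀ - Real.log x₁) * (Real.log x₀ - Real.log x₂)))
        * f x₁ ^ (1 / ((Real.log x₁ - Real.log x₀) * (Real.log x₁ - Real.log x₂)))
        * f x₂ ^ (1 / ((Real.log x₂ - Real.log x₀) * (Real.log x₂ - Real.log x₁))) :=
    mul_pos (mul_pos (Real.rpow_pos_of_pos hf0 _) (Real.rpow_pos_of_pos hf1 _))
      (Real.rpow_pos_of_pos hf2 _)
  have d01 : Real.log x₀ - Real.log x₁ ≠ 0 := sub_ne_zero.mpr h01
  have d02 : Real.log x₀ - Real.log x₂ ≠ 0 := sub_ne_zero.mpr h02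
  have d12 : Real.log x₁ - Real.log x₂ ≠ 0 := sub_ne_zero.mpr h12
  have d10 : Real.log x₁ - Real.log x₀ ≠ 0 := sub_ne_zero.mpr (Ne.symm h01)
  have d20 : Real.log x₂ - Real.log x₀ ≠ 0 := sub_ne_zero.mpr (Ne.symm h02)
  have d21 : Real.log x₂ - Real.log x₁ ≠ 0 := sub_ne_zero.mpr (Ne.symm h12)
  have key : Real.log ((gDD₁ f x₁ x₂ / gDD₁ f x₀ x₁) ^ (1 / (Real.log x₂ - Real.log x₀)))
      = Real.log (f x₀ ^ (1 / ((Real.log x₀ - Real.log x₁) * (Real.log x₀ - Real.log x₂)))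
        * f x₁ ^ (1 / ((Real.log x₁ - Real.log x₀) * (Real.log x₁ - Real.log x₂)))
        * f x₂ ^ (1 / ((Real.log x₂ - Real.log x₀) * (Real.log x₂ - Real.log x₁)))) := by
    rw [Real.log_rpow (div_pos hg12 hg01), Real.log_div hg12.ne' hg01.ne',
      Real.log_mul (mul_pos (Real.rpow_pos_of_pos hf0 _) (Real.rpow_pos_of_pos hf1 _)).ne'
        (Real.rpow_pos_of_pos hf2 _).ne',
      Real.log_mul (Real.rpow_pos_of_pos hf0 _).ne' (Real.rpow_pos_of_pos hf1 _).ne',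
      Real.log_rpow hf0, Real.log_rpow hf1, Real.log_rpow hf2]
    unfold gDD₁
    rw [Real.log_rpow (div_pos hf2 hf1), Real.log_rpow (div_pos hf1 hf0),
      Real.log_div hf2.ne' hf1.ne', Real.log_div hf1.ne' hf0.ne']
    field_simp
    ring
  exact Real.log_injOn_pos (Set.mem_Ioi.mpr hL) (Set.mem_Ioi.mpr hR) key
end

section
/- Symmetric product formula for geometric divided differences: let f be a function from positive reals to positive reals and let x₀, x₁, …, x_n > 0 have pairwise distinct logarithms. Define the geometric divided differences recursively by D(xᵢ) = f(xᵢ) and D(x_i,…,x_{i+k}) = ( D(x_{i+1},…,x_{i+k}) / D(x_i,…,x_{i+k−1}) )^{1/(ln x_{i+k} − ln x_i)}. Then D(x₀,…,x_n) = ∏_{i=0}^{n} f(x_i)^{ 1 / ∏_{j ≠ i} (ln x_i − ln x_j) }; in particular the n-th geometric divided difference is symmetric in all its arguments. -/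
/-- The `n`-th geometric divided difference of `f` at nodes `x 0, …, x n`, defined
recursively by `D(xᵢ) = f xᵢ` and
`D(x_i,…,x_{i+k}) = (D(x_{i+1},…,x_{i+k}) / D(x_i,…,x_{i+k-1})) ^ (1/(ln x_{i+k} - ln x_i))`. -/
noncomputable def gDD (f : ℝ → ℝ) : ℕ → (ℕ → ℝ) → ℝ
  | 0, x => f (x 0)
  | n + 1, x =>
      (gDD f n (fun i => x (i + 1)) / gDD f n x) ^
        (1 / (Real.log (x (n + 1)) - Real.log (x 0)))

noncomputable def dd : ℕ → (ℕ → ℝ) → (ℕ → ℝ) → ℝ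
  | 0, _, g => g 0
  | n + 1, y, g =>
      (dd n (fun i => y (i + 1)) (fun i => g (i + 1)) - dd n y g) / (y (n + 1) - y 0)

private lemma aux_mid (G a b P : ℝ) (ha : a ≠ 0) (hb : b ≠ 0) (hP : P ≠ 0) :
    G / (b * (a * P)) * (b - a) = G / (a * P) - G / (b * P) := by
  field_simp

private lemma aux_b0 (G u Q : ℝ) (hu : u ≠ 0) (hQ : Q ≠ 0) :
    G / (u * Q) * (-u) = -(G / Q) := by
  field_simp

private lemma aux_bN (G d Q : ℝ) (hd : d ≠ 0) (hQ : Q ≠ 0) :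
    G / (d * Q) * d = G / Q := by
  field_simp

lemma dd_formula : ∀ (n : ℕ) (y g : ℕ → ℝ),
    (∀ i ∈ Finset.range (n + 1), ∀ j ∈ Finset.range (n + 1), i ≠ j → y i ≠ y j) →
    dd n y g = ∑ i ∈ Finset.range (n + 1),
      g i / ∏ j ∈ (Finset.range (n + 1)).erase i, (y i - y j) := by
  intro n
  induction n with
  | zero => intro y g _; simp [dd]
  | succ n IH =>
    intro y g hy
    have hne : ∀ i ∈ Finset.range (n + 2), ∀ j ∈ Finset.range (n + 2), i ≠ j →
        y i - y j ≠ 0 := by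
      intro i hi j hj hij
      exact sub_ne_zero.mpr (hy i hi j hj hij)
    -- IH for shifted nodes
    have hyA : ∀ i ∈ Finset.range (n + 1), ∀ j ∈ Finset.range (n + 1), i ≠ j →
        y (i + 1) ≠ y (j + 1) := by
      intro i hi j hj hij
      simp only [Finset.mem_range] at hi hj
      exact hy (i + 1) (by simp; omega) (j + 1) (by simp; omega) (by omega)
    have hyB : ∀ i ∈ Finset.range (n + 1), ∀ j ∈ Finset.range (n + 1), i ≠ j →
        y i ≠ y j := by
      intro i hi j hj hij
      simp only [Finset.mem_range] at hi hj
      exact hy i (by simp; omega) j (by simp; omega) hij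
    have hA := IH (fun i => y (i + 1)) (fun i => g (i + 1)) hyA
    have hB := IH y g hyB
    -- shifted sum as a sum over Ico 1 (n+2)
    have hshift : (∑ i ∈ Finset.range (n + 1),
        (fun i => g (i + 1)) i / ∏ j ∈ (Finset.range (n + 1)).erase i,
          ((fun i => y (i + 1)) i - (fun i => y (i + 1)) j))
        = ∑ i ∈ Finset.Ico 1 (n + 2),
            g i / ∏ j ∈ (Finset.Ico 1 (n + 2)).erase i, (y i - y j) := by
      rw [Finset.sum_Ico_eq_sum_range]
      simp only [Nat.add_sub_cancel]
      apply Finset.sum_congr rfl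
      intro i hi
      simp only [Finset.mem_range] at hi
      rw [add_comm 1 i]
      congr 1
      apply Finset.prod_nbij' (fun j => j + 1) (fun j => j - 1)
      · intro a ha
        simp only [Finset.mem_erase, Finset.mem_range] at ha
        simp only [Finset.mem_erase, Finset.mem_Ico]
        omega
      · intro a ha
        simp only [Finset.mem_erase, Finset.mem_Ico] at ha
        simp only [Finset.mem_erase, Finset.mem_range]
        omega
      · intro a _; rfl
      · intro a ha
        simp only [Finset.mem_erase, Finset.mem_Ico] at ha
        omega
      · intro a _; rfl
    have hD : y (n + 1) - y 0 ≠ 0 :=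
      hne (n + 1) (by simp) 0 (by simp) (by omega)
    show (dd n (fun i => y (i + 1)) (fun i => g (i + 1)) - dd n y g) / (y (n + 1) - y 0) = _
    rw [hA, hB, hshift]
    -- split all three sums
    have split1 : (∑ i ∈ Finset.Ico 1 (n + 2),
        g i / ∏ j ∈ (Finset.Ico 1 (n + 2)).erase i, (y i - y j))
        = (∑ i ∈ Finset.Ico 1 (n + 1),
            g i / ∏ j ∈ (Finset.Ico 1 (n + 2)).erase i, (y i - y j))
          + g (n + 1) / ∏ j ∈ (Finset.Ico 1 (n + 2)).erase (n + 1), (y (n + 1) - y j) := by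
      rw [Finset.sum_Ico_succ_top (by omega)]
    have split2 : (∑ i ∈ Finset.range (n + 1),
        g i / ∏ j ∈ (Finset.range (n + 1)).erase i, (y i - y j))
        = g 0 / ∏ j ∈ (Finset.range (n + 1)).erase 0, (y 0 - y j)
          + ∑ i ∈ Finset.Ico 1 (n + 1),
              g i / ∏ j ∈ (Finset.range (n + 1)).erase i, (y i - y j) := by
      rw [Finset.range_eq_Ico, Finset.sum_eq_sum_Ico_succ_bot (by omega)]
    have split3 : (∑ i ∈ Finset.range (n + 2),
        g i / ∏ j ∈ (Finset.range (n + 2)).erase i, (y i - y j))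
        = g 0 / ∏ j ∈ (Finset.range (n + 2)).erase 0, (y 0 - y j)
          + (∑ i ∈ Finset.Ico 1 (n + 1),
              g i / ∏ j ∈ (Finset.range (n + 2)).erase i, (y i - y j))
          + g (n + 1) / ∏ j ∈ (Finset.range (n + 2)).erase (n + 1), (y (n + 1) - y j) := by
      rw [Finset.range_eq_Ico, Finset.sum_eq_sum_Ico_succ_bot (by omega),
        Finset.sum_Ico_succ_top (by omega)]
      ring
    rw [split1, split2, split3]
    rw [div_eq_iff hD]
    rw [add_mul, add_mul, Finset.sum_mul]
    -- boundary sets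
    have e0big : (Finset.range (n + 2)).erase 0 = insert (n + 1) (Finset.Ico 1 (n + 1)) := by
      ext a; simp only [Finset.mem_erase, Finset.mem_range, Finset.mem_insert, Finset.mem_Ico]; omega
    have e0small : (Finset.range (n + 1)).erase 0 = Finset.Ico 1 (n + 1) := by
      ext a; simp only [Finset.mem_erase, Finset.mem_range, Finset.mem_Ico]; omega
    have eNbig : (Finset.range (n + 2)).erase (n + 1) = insert 0 (Finset.Ico 1 (n + 1)) := by
      ext a; simp only [Finset.mem_erase, Finset.mem_range, Finset.mem_insert, Finset.mem_Ico]; omega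
    have eNico : (Finset.Ico 1 (n + 2)).erase (n + 1) = Finset.Ico 1 (n + 1) := by
      ext a; simp only [Finset.mem_erase, Finset.mem_Ico]; omega
    -- nonvanishing of the middle products
    have hPne : ∀ i ∈ Finset.Ico 1 (n + 1),
        (∏ j ∈ (Finset.Ico 1 (n + 1)).erase i, (y i - y j)) ≠ 0 := by
      intro i hi
      simp only [Finset.mem_Ico] at hi
      rw [Finset.prod_ne_zero_iff]
      intro j hj
      simp only [Finset.mem_erase, Finset.mem_Ico] at hj
      exact hne i (by simp; omega) j (by simp; omega) (by omega)
    have hQ0 : (∏ j ∈ Finset.Ico 1 (n + 1), (y 0 - y j)) ≠ 0 := by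
      rw [Finset.prod_ne_zero_iff]
      intro j hj
      simp only [Finset.mem_Ico] at hj
      exact hne 0 (by simp) j (by simp; omega) (by omega)
    have hQN : (∏ j ∈ Finset.Ico 1 (n + 1), (y (n + 1) - y j)) ≠ 0 := by
      rw [Finset.prod_ne_zero_iff]
      intro j hj
      simp only [Finset.mem_Ico] at hj
      exact hne (n + 1) (by simp) j (by simp; omega) (by omega)
    -- middle terms
    have hmid : ∀ i ∈ Finset.Ico 1 (n + 1),
        (g i / ∏ j ∈ (Finset.range (n + 2)).erase i, (y i - y j)) * (y (n + 1) - y 0)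
        = g i / ∏ j ∈ (Finset.Ico 1 (n + 2)).erase i, (y i - y j)
          - g i / ∏ j ∈ (Finset.range (n + 1)).erase i, (y i - y j) := by
      intro i hi
      have hi' := hi
      simp only [Finset.mem_Ico] at hi'
      have eIco : (Finset.Ico 1 (n + 2)).erase i
          = insert (n + 1) ((Finset.Ico 1 (n + 1)).erase i) := by
        ext a; simp only [Finset.mem_erase, Finset.mem_Ico, Finset.mem_insert]; omega
      have eSmall : (Finset.range (n + 1)).erase i
          = insert 0 ((Finset.Ico 1 (n + 1)).erase i) := by
        ext a; simp only [Finset.mem_erase, Finset.mem_range, Finset.mem_insert, Finset.mem_Ico]; omega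
      have eBig : (Finset.range (n + 2)).erase i
          = insert 0 (insert (n + 1) ((Finset.Ico 1 (n + 1)).erase i)) := by
        ext a; simp only [Finset.mem_erase, Finset.mem_range, Finset.mem_insert, Finset.mem_Ico]; omega
      have m1 : (n + 1) ∉ (Finset.Ico 1 (n + 1)).erase i := by
        simp only [Finset.mem_erase, Finset.mem_Ico]; omega
      have m2 : 0 ∉ insert (n + 1) ((Finset.Ico 1 (n + 1)).erase i) := by
        simp only [Finset.mem_insert, Finset.mem_erase, Finset.mem_Ico]; omega
      have m3 : 0 ∉ (Finset.Ico 1 (n + 1)).erase i := by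
        simp only [Finset.mem_erase, Finset.mem_Ico]; omega
      rw [eIco, eSmall, eBig, Finset.prod_insert m1, Finset.prod_insert m3,
        Finset.prod_insert m2, Finset.prod_insert m1]
      have h1 : y i - y (n + 1) ≠ 0 := hne i (by simp; omega) (n + 1) (by simp) (by omega)
      have h2 : y i - y 0 ≠ 0 := hne i (by simp; omega) 0 (by simp) (by omega)
      have h3 := hPne i hi
      rw [show y (n + 1) - y 0 = (y i - y 0) - (y i - y (n + 1)) by ring]
      exact aux_mid _ _ _ _ h1 h2 h3
    rw [Finset.sum_congr rfl hmid, Finset.sum_sub_distrib]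
    -- boundary identities
    have hb0 : (g 0 / ∏ j ∈ (Finset.range (n + 2)).erase 0, (y 0 - y j)) * (y (n + 1) - y 0)
        = - (g 0 / ∏ j ∈ (Finset.range (n + 1)).erase 0, (y 0 - y j)) := by
      rw [e0big, e0small, Finset.prod_insert (by simp only [Finset.mem_Ico]; omega)]
      have h1 : y 0 - y (n + 1) ≠ 0 := hne 0 (by simp) (n + 1) (by simp) (by omega)
      rw [show y (n + 1) - y 0 = -(y 0 - y (n + 1)) by ring]
      exact aux_b0 _ _ _ h1 hQ0
    have hbN : (g (n + 1) / ∏ j ∈ (Finset.range (n + 2)).erase (n + 1), (y (n + 1) - y j))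
          * (y (n + 1) - y 0)
        = g (n + 1) / ∏ j ∈ (Finset.Ico 1 (n + 2)).erase (n + 1), (y (n + 1) - y j) := by
      rw [eNbig, eNico, Finset.prod_insert (by simp only [Finset.mem_Ico]; omega)]
      exact aux_bN _ _ _ hD hQN
    rw [hb0, hbN]
    ring

lemma gDD_pos (f : ℝ → ℝ) (hf : ∀ t : ℝ, 0 < t → 0 < f t) :
    ∀ (n : ℕ) (x : ℕ → ℝ), (∀ i ≤ n, 0 < x i) → 0 < gDD f n x := by
  intro n
  induction n with
  | zero => intro x hx; exact hf _ (hx 0 le_rfl)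
  | succ n IH =>
    intro x hx
    have h1 : 0 < gDD f n (fun i => x (i + 1)) := IH _ (fun i hi => hx (i + 1) (by omega))
    have h2 : 0 < gDD f n x := IH _ (fun i hi => hx i (by omega))
    exact Real.rpow_pos_of_pos (div_pos h1 h2) _

lemma log_gDD (f : ℝ → ℝ) (hf : ∀ t : ℝ, 0 < t → 0 < f t) :
    ∀ (n : ℕ) (x : ℕ → ℝ), (∀ i ≤ n, 0 < x i) →
      Real.log (gDD f n x)
        = dd n (fun i => Real.log (x i)) (fun i => Real.log (f (x i))) := by
  intro n
  induction n with
  | zero => intro x hx; rfl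
  | succ n IH =>
    intro x hx
    have h1 : 0 < gDD f n (fun i => x (i + 1)) :=
      gDD_pos f hf n _ (fun i hi => hx (i + 1) (by omega))
    have h2 : 0 < gDD f n x := gDD_pos f hf n x (fun i hi => hx i (by omega))
    show Real.log ((gDD f n (fun i => x (i + 1)) / gDD f n x) ^
        (1 / (Real.log (x (n + 1)) - Real.log (x 0)))) = _
    rw [Real.log_rpow (div_pos h1 h2), Real.log_div h1.ne' h2.ne',
      IH _ (fun i hi => hx (i + 1) (by omega)), IH x (fun i hi => hx i (by omega))]
    show _ = (dd n _ _ - dd n _ _) / (Real.log (x (n + 1)) - Real.log (x 0))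
    ring

/-- Symmetric product formula for geometric divided differences:
`D(x₀,…,x_n) = ∏_{i=0}^n f (x i) ^ (1 / ∏_{j ≠ i} (ln x_i - ln x_j))`;
in particular the `n`-th geometric divided difference is symmetric in its arguments. -/
theorem geometric_divided_difference_symmetric_product
    (f : ℝ → ℝ) (hf : ∀ t : ℝ, 0 < t → 0 < f t) (n : ℕ) (x : ℕ → ℝ)
    (hx : ∀ i ∈ Finset.range (n + 1), 0 < x i)
    (hx' : ∀ i ∈ Finset.range (n + 1), ∀ j ∈ Finset.range (n + 1), i ≠ j →
      Real.log (x i) ≠ Real.log (x j)) :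
    gDD f n x
      = ∏ i ∈ Finset.range (n + 1),
          f (x i) ^
            (1 / ∏ j ∈ (Finset.range (n + 1)).erase i, (Real.log (x i) - Real.log (x j))) := by
  have hx0 : ∀ i ≤ n, 0 < x i := fun i hi => hx i (by simp; omega)
  have hL : 0 < gDD f n x := gDD_pos f hf n x hx0
  have hR : 0 < ∏ i ∈ Finset.range (n + 1),
      f (x i) ^ (1 / ∏ j ∈ (Finset.range (n + 1)).erase i,
        (Real.log (x i) - Real.log (x j))) := by
    apply Finset.prod_pos
    intro i hi
    exact Real.rpow_pos_of_pos (hf _ (hx i hi)) _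
  rw [← Real.exp_log hL, ← Real.exp_log hR]
  congr 1
  rw [log_gDD f hf n x hx0, dd_formula n _ _ hx']
  rw [Real.log_prod (fun i hi => (Real.rpow_pos_of_pos (hf _ (hx i hi)) _).ne')]
  apply Finset.sum_congr rfl
  intro i hi
  rw [Real.log_rpow (hf _ (hx i hi))]
  ring
end

section
/- Relation between geometric divided differences and geometric forward differences at geometrically equally spaced nodes: let f be a function from positive reals to positive reals, let x₀ > 0, h > 0 with ln h ≠ 0, and set x_k = x₀·h^k for k = 0, …, n. Then the n-th geometric divided difference equals ∏_{i=0}^{n} f(x₀·h^i)^{ 1 / ∏_{j ≠ i} ((i−j)·ln h) } = ( ∏_{k=0}^{n} f(x₀·h^{n−k})^{(−1)^k·C(n,k)} )^{ 1/(n!·(ln h)^n) }, i.e. f(x₀,…,x_n) = (Δ_G^n f(x₀))^{1/(n!·(ln h)^n)}. -/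
lemma prod_erase_sub (n i : ℕ) (hi : i ≤ n) :
    ∏ j ∈ (Finset.range (n+1)).erase i, ((i:ℝ) - (j:ℝ))
      = (-1)^(n-i) * (Nat.factorial i) * (Nat.factorial (n-i)) := by
  have hset : (Finset.range (n+1)).erase i
      = Finset.range i ∪ Finset.Ico (i+1) (n+1) := by
    ext a
    simp only [Finset.mem_erase, Finset.mem_range, Finset.mem_union, Finset.mem_Ico]
    omega
  have hdisj : Disjoint (Finset.range i) (Finset.Ico (i+1) (n+1)) := by
    simp only [Finset.disjoint_left, Finset.mem_range, Finset.mem_Ico]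
    omega
  rw [hset, Finset.prod_union hdisj]
  have hA : ∏ j ∈ Finset.range i, ((i:ℝ) - (j:ℝ)) = Nat.factorial i := by
    rw [← Finset.prod_range_reflect]
    have h1 : ∀ j ∈ Finset.range i, ((i:ℝ) - ((i - 1 - j : ℕ):ℝ)) = (j:ℝ) + 1 := by
      intro j hj
      have hj' := Finset.mem_range.mp hj
      have h2 : (i - 1 - j : ℕ) = i - (j+1) := by omega
      rw [h2, Nat.cast_sub (by omega)]
      push_cast; ring
    rw [Finset.prod_congr rfl h1]
    exact_mod_cast Finset.prod_range_add_one_eq_factorial i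
  have hB : ∏ j ∈ Finset.Ico (i+1) (n+1), ((i:ℝ) - (j:ℝ))
      = (-1)^(n-i) * (Nat.factorial (n-i)) := by
    rw [Finset.prod_Ico_eq_prod_range]
    have hnn : n + 1 - (i + 1) = n - i := by omega
    rw [hnn]
    have h1 : ∀ t ∈ Finset.range (n - i), ((i:ℝ) - ((i + 1 + t : ℕ):ℝ))
        = -1 * ((t:ℝ) + 1) := by
      intro t _
      push_cast; ring
    rw [Finset.prod_congr rfl h1, Finset.prod_mul_distrib, Finset.prod_const,
      Finset.card_range]
    congr 1
    exact_mod_cast Finset.prod_range_add_one_eq_factorial (n - i)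
  rw [hA, hB]; ring


/-- Relation between geometric divided differences and geometric forward differences
at geometrically equally spaced nodes `x_k = x₀ * h^k`: the `n`-th geometric divided
difference equals the `n`-th geometric forward difference raised to the power
`1 / (n! * (ln h)^n)`, i.e. `f(x₀,…,x_n) = (Δ_G^n f (x₀)) ^ (1/(n! * (ln h)^n))`. -/
theorem geometric_divided_difference_eq_forward_difference
    (f : ℝ → ℝ) (hf : ∀ t : ℝ, 0 < t → 0 < f t)
    (x₀ h : ℝ) (hx₀ : 0 < x₀) (hh : 0 < h) (hlh : Real.log h ≠ 0) (n : ℕ) :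
    (∏ i ∈ Finset.range (n + 1),
        f (x₀ * h ^ i) ^
          (1 / ∏ j ∈ (Finset.range (n + 1)).erase i, (((i : ℝ) - (j : ℝ)) * Real.log h)))
      = (∏ k ∈ Finset.range (n + 1),
            f (x₀ * h ^ (n - k)) ^ ((-1 : ℝ) ^ k * (n.choose k : ℝ)))
          ^ (1 / ((n.factorial : ℝ) * (Real.log h) ^ n)) := by
  have hfp : ∀ i : ℕ, 0 < f (x₀ * h ^ i) := fun i => hf _ (mul_pos hx₀ (pow_pos hh i))
  have hLpos : ∀ i : ℕ, (0:ℝ) < f (x₀ * h ^ i) ^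
      (1 / ∏ j ∈ (Finset.range (n + 1)).erase i, (((i : ℝ) - (j : ℝ)) * Real.log h)) :=
    fun i => Real.rpow_pos_of_pos (hfp i) _
  have hPpos : (0:ℝ) < ∏ k ∈ Finset.range (n + 1),
      f (x₀ * h ^ (n - k)) ^ ((-1 : ℝ) ^ k * (n.choose k : ℝ)) :=
    Finset.prod_pos fun k _ => Real.rpow_pos_of_pos (hfp _) _
  have hLHSpos : (0:ℝ) < ∏ i ∈ Finset.range (n + 1),
      f (x₀ * h ^ i) ^
        (1 / ∏ j ∈ (Finset.range (n + 1)).erase i, (((i : ℝ) - (j : ℝ)) * Real.log h)) :=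
    Finset.prod_pos fun i _ => hLpos i
  have hRHSpos : (0:ℝ) < (∏ k ∈ Finset.range (n + 1),
      f (x₀ * h ^ (n - k)) ^ ((-1 : ℝ) ^ k * (n.choose k : ℝ)))
        ^ (1 / ((n.factorial : ℝ) * (Real.log h) ^ n)) :=
    Real.rpow_pos_of_pos hPpos _
  -- it suffices to compare logs
  rw [← Real.exp_log hLHSpos, ← Real.exp_log hRHSpos]
  congr 1
  rw [Real.log_prod (fun i _ => (hLpos i).ne'),
    Real.log_rpow hPpos, Real.log_prod
      (fun k _ => (Real.rpow_pos_of_pos (hfp _) _).ne')]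
  simp only [Real.log_rpow (hfp _)]
  -- reflect the RHS sum
  have hreflect : ∑ k ∈ Finset.range (n + 1),
        (-1:ℝ) ^ k * (n.choose k : ℝ) * Real.log (f (x₀ * h ^ (n - k)))
      = ∑ i ∈ Finset.range (n + 1),
        (-1:ℝ) ^ (n - i) * (n.choose i : ℝ) * Real.log (f (x₀ * h ^ i)) := by
    rw [← Finset.sum_range_reflect
      (fun i => (-1:ℝ) ^ (n - i) * (n.choose i : ℝ) * Real.log (f (x₀ * h ^ i))) (n+1)]
    apply Finset.sum_congr rfl
    intro k hk
    have hk' : k ≤ n := by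
      have := Finset.mem_range.mp hk; omega
    have e1 : n + 1 - 1 - k = n - k := by omega
    rw [e1, Nat.sub_sub_self hk', Nat.choose_symm hk']
  rw [hreflect, Finset.mul_sum]
  apply Finset.sum_congr rfl
  intro i hi
  have hi' : i ≤ n := Nat.lt_succ_iff.mp (Finset.mem_range.mp hi)
  rw [Finset.prod_mul_distrib, Finset.prod_const, Finset.card_erase_of_mem
    (Finset.mem_range.mpr (Nat.lt_succ_of_le hi')), Finset.card_range,
    Nat.succ_sub_one, prod_erase_sub n i hi']
  rw [← mul_assoc]
  congr 1
  -- exponent identity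
  have hfac : ((n.choose i : ℝ)) * (Nat.factorial i) * (Nat.factorial (n - i))
      = (Nat.factorial n : ℝ) := by
    exact_mod_cast Nat.choose_mul_factorial_mul_factorial hi'
  have hfi : (Nat.factorial i : ℝ) ≠ 0 := Nat.cast_ne_zero.mpr (Nat.factorial_ne_zero i)
  have hfni : (Nat.factorial (n-i) : ℝ) ≠ 0 := Nat.cast_ne_zero.mpr (Nat.factorial_ne_zero _)
  have hfn : (Nat.factorial n : ℝ) ≠ 0 := Nat.cast_ne_zero.mpr (Nat.factorial_ne_zero n)
  have hLn : (Real.log h) ^ n ≠ 0 := pow_ne_zero n hlh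
  have hsq : ((-1:ℝ)^(n-i)) * ((-1:ℝ)^(n-i)) = 1 := by
    rw [← pow_add, ← two_mul, pow_mul]; norm_num
  field_simp
  rw [← hfac]
  ring_nf
  simp [pow_mul, neg_one_sq]
  rw [sq, hsq, mul_one]
end

section
/- Geometric Newton–Gregory forward interpolation formula for geometric polynomials: let P be a real polynomial with natural degree at most n, let f(x) = exp(P(ln x)) for x > 0, let x₀ > 0 and h > 0 with ln h ≠ 0, and set x_k = x₀·h^k. For x > 0 put u = (ln x − ln x₀)/ln h. Then f(x) = ∏_{k=0}^{n} ( Δ_G^k f(x₀) )^{ u(u−1)⋯(u−k+1) / k! }, where Δ_G^k f(x₀) = ∏_{j=0}^{k} f(x₀·h^{k−j})^{(−1)^j·C(k,j)} is the k-th geometric forward difference (the k = 0 factor being f(x₀)). -/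
open Finset Polynomial fwdDiff

/-- Newton forward-difference interpolation for real polynomials of degree ≤ n,
at real argument `u`, with unit step. -/
lemma newton_interp_aux (n : ℕ) (R : Polynomial ℝ) (hR : R.natDegree ≤ n) (u : ℝ) :
    R.eval u = ∑ k ∈ range (n + 1),
      ((fwdDiff (1:ℝ))^[k] (fun t : ℝ => R.eval t) 0)
        * ((∏ i ∈ range k, (u - (i : ℝ))) / (k.factorial : ℝ)) := by
  set d : ℕ → ℝ := fun k => (fwdDiff (1:ℝ))^[k] (fun t : ℝ => R.eval t) 0 with hd
  set Q : Polynomial ℝ := ∑ k ∈ range (n + 1),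
      Polynomial.C (d k / (k.factorial : ℝ)) * ∏ i ∈ range k, (X - Polynomial.C (i : ℝ)) with hQ
  have hQev : ∀ v : ℝ, Q.eval v
      = ∑ k ∈ range (n + 1), (d k / (k.factorial : ℝ)) * ∏ i ∈ range k, (v - (i : ℝ)) := by
    intro v
    simp [hQ, eval_finset_sum, eval_prod]
  have hQdeg : Q.natDegree ≤ n := by
    refine (natDegree_sum_le _ _).trans ?_
    rw [Finset.fold_max_le]
    refine ⟨Nat.zero_le _, fun k hk => ?_⟩
    simp only [Function.comp_apply]
    refine (natDegree_mul_le).trans ?_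
    have h2 : (∏ i ∈ range k, (X - Polynomial.C (i : ℝ))).natDegree = k := by
      rw [natDegree_prod _ _ fun i _ => X_sub_C_ne_zero _]
      exact Eq.trans
        (Finset.sum_congr rfl fun i _ => natDegree_X_sub_C ((i : ℕ) : ℝ)) (by simp)
    simp only [natDegree_C, Nat.zero_add, h2]
    exact Nat.lt_succ_iff.mp (mem_range.mp hk)
  have hprod_lt : ∀ m k : ℕ, m < k → (∏ i ∈ range k, ((m : ℝ) - (i : ℝ))) = 0 := by
    intro m k hmk
    exact Finset.prod_eq_zero (mem_range.mpr hmk) (by simp)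
  have hprod_le : ∀ m k : ℕ, k ≤ m →
      (∏ i ∈ range k, ((m : ℝ) - (i : ℝ))) = (m.descFactorial k : ℝ) := by
    intro m k hkm
    rw [Nat.descFactorial_eq_prod_range, Nat.cast_prod]
    refine Finset.prod_congr rfl fun i hi => ?_
    have : i ≤ m := le_of_lt (lt_of_lt_of_le (mem_range.mp hi) hkm)
    rw [Nat.cast_sub this]
  -- Q agrees with R at the nodes 0, 1, ..., n
  have hnodes : ∀ m : ℕ, m ≤ n → Q.eval (m : ℝ) = R.eval (m : ℝ) := by
    intro m hm
    have hsub : range (m + 1) ⊆ range (n + 1) := by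
      intro a ha; exact mem_range.mpr (lt_of_lt_of_le (mem_range.mp ha) (by omega))
    have h1 : Q.eval (m : ℝ) = ∑ k ∈ range (m + 1), (m.choose k : ℝ) * d k := by
      rw [hQev, ← Finset.sum_subset hsub]
      · refine Finset.sum_congr rfl fun k hk => ?_
        have hk' : k ≤ m := Nat.lt_succ_iff.mp (mem_range.mp hk)
        rw [hprod_le m k hk', Nat.descFactorial_eq_factorial_mul_choose]
        have hkf : (k.factorial : ℝ) ≠ 0 := Nat.cast_ne_zero.mpr k.factorial_ne_zero
        push_cast
        field_simp
      · intro k hk hk'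
        have hmk : m < k := by
          by_contra hc
          exact hk' (mem_range.mpr (by omega))
        rw [hprod_lt m k hmk, mul_zero]
    have h2 := shift_eq_sum_fwdDiff_iter (1 : ℝ) (fun t : ℝ => R.eval t) m 0
    simp only [zero_add, nsmul_eq_mul, mul_one, smul_eq_mul] at h2
    rw [h1, h2]
  have hRQ : R = Q := by
    have hz : R - Q = 0 := by
      refine Polynomial.eq_zero_of_natDegree_lt_card_of_eval_eq_zero' _
        ((range (n + 1)).image (fun m : ℕ => (m : ℝ))) ?_ ?_
      · intro v hv
        obtain ⟨m, hm, rfl⟩ := Finset.mem_image.mp hv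
        have := hnodes m (Nat.lt_succ_iff.mp (mem_range.mp hm))
        simp [this]
      · have hcard : #((range (n + 1)).image (fun m : ℕ => (m : ℝ))) = n + 1 := by
          rw [Finset.card_image_of_injective _ Nat.cast_injective, Finset.card_range]
        rw [hcard]
        exact lt_of_le_of_lt (natDegree_sub_le _ _) (by omega)
    exact sub_eq_zero.mp hz
  calc R.eval u = Q.eval u := by rw [hRQ]
    _ = _ := by
        rw [hQev]
        exact Finset.sum_congr rfl fun k _ => by ring

/-- The alternating-sign sum form of the iterated forward difference. -/
lemma fwdDiff_alt_aux (k : ℕ) (g : ℝ → ℝ) :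
    ∑ j ∈ range (k + 1), ((-1 : ℝ) ^ j * (k.choose j : ℝ)) * g (((k - j : ℕ) : ℝ))
      = (fwdDiff (1:ℝ))^[k] g 0 := by
  have h := fwdDiff_iter_eq_sum_shift (1 : ℝ) g k 0
  simp only [zero_add, nsmul_eq_mul, mul_one, zsmul_eq_mul, Int.cast_mul, Int.cast_pow,
    Int.cast_neg, Int.cast_one, Int.cast_natCast] at h
  rw [h]
  conv_lhs => rw [← Finset.sum_range_reflect]
  refine Finset.sum_congr rfl fun j hj => ?_
  have hj' : j ≤ k := Nat.lt_succ_iff.mp (mem_range.mp hj)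
  have h1 : k + 1 - 1 - j = k - j := by omega
  have h2 : k - (k - j) = j := by omega
  rw [h1, h2, Nat.choose_symm hj']

/-- Geometric Newton–Gregory forward interpolation formula for geometric polynomials:
for `f x = exp (P (ln x))` with `P` of degree at most `n`, nodes `x_k = x₀ * h^k`,
and `u = (ln x - ln x₀)/ln h`, one has
`f x = ∏_{k=0}^n (Δ_G^k f (x₀)) ^ (u(u-1)⋯(u-k+1)/k!)`, where
`Δ_G^k f (x₀) = ∏_{j=0}^k f (x₀ * h^(k-j)) ^ ((-1)^j * C(k,j))`. -/
theorem geometric_newton_gregory_forward_interpolation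
    (n : ℕ) (P : Polynomial ℝ) (hP : P.natDegree ≤ n)
    (f : ℝ → ℝ) (hf : ∀ t : ℝ, f t = Real.exp (P.eval (Real.log t)))
    (x₀ h : ℝ) (hx₀ : 0 < x₀) (hh : 0 < h) (hlh : Real.log h ≠ 0)
    (x : ℝ) (hx : 0 < x) (u : ℝ) (hu : u = (Real.log x - Real.log x₀) / Real.log h) :
    f x
      = ∏ k ∈ Finset.range (n + 1),
          (∏ j ∈ Finset.range (k + 1),
              f (x₀ * h ^ (k - j)) ^ ((-1 : ℝ) ^ j * (k.choose j : ℝ)))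
            ^ ((∏ i ∈ Finset.range k, (u - (i : ℝ))) / (k.factorial : ℝ)) := by
  set R : Polynomial ℝ := P.comp (Polynomial.C (Real.log x₀)
      + Polynomial.C (Real.log h) * Polynomial.X) with hR
  have hRdeg : R.natDegree ≤ n := by
    refine le_trans natDegree_comp_le ?_
    have hq : (Polynomial.C (Real.log x₀)
        + Polynomial.C (Real.log h) * Polynomial.X).natDegree ≤ 1 := by
      refine (natDegree_add_le _ _).trans (max_le ?_ ?_)
      · exact le_trans (le_of_eq (natDegree_C _)) (Nat.zero_le 1)
      · exact (natDegree_C_mul_le _ _).trans (by simp)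
    calc P.natDegree * _ ≤ P.natDegree * 1 := Nat.mul_le_mul_left _ hq
      _ ≤ n := by simpa using hP
  have hReval : ∀ t : ℝ, R.eval t = P.eval (Real.log x₀ + Real.log h * t) := by
    intro t; simp [hR, eval_comp]
  have hfnode : ∀ m : ℕ, f (x₀ * h ^ m) = Real.exp (R.eval (m : ℝ)) := by
    intro m
    rw [hf, hReval]
    congr 2
    rw [Real.log_mul (ne_of_gt hx₀) (by positivity), Real.log_pow]
    ring
  have hfx : f x = Real.exp (R.eval u) := by
    rw [hf, hReval]
    have hlu : Real.log h * u = Real.log x - Real.log x₀ := by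
      rw [hu]; field_simp
    congr 2
    rw [hlu]; ring
  have hrpow : ∀ a b : ℝ, (Real.exp a) ^ b = Real.exp (a * b) := fun a b => by
    rw [Real.rpow_def_of_pos (Real.exp_pos a), Real.log_exp]
  have hk1 : ∀ k : ℕ,
      (∏ j ∈ Finset.range (k + 1),
          f (x₀ * h ^ (k - j)) ^ ((-1 : ℝ) ^ j * (k.choose j : ℝ)))
        = Real.exp (∑ j ∈ Finset.range (k + 1),
            ((-1 : ℝ) ^ j * (k.choose j : ℝ)) * R.eval (((k - j : ℕ) : ℝ))) := by
    intro k
    rw [Real.exp_sum]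
    refine Finset.prod_congr rfl fun j _ => ?_
    rw [hfnode (k - j), hrpow]
    congr 1
    ring
  calc f x = Real.exp (R.eval u) := hfx
    _ = Real.exp (∑ k ∈ Finset.range (n + 1),
          ((fwdDiff (1:ℝ))^[k] (fun t : ℝ => R.eval t) 0)
            * ((∏ i ∈ Finset.range k, (u - (i : ℝ))) / (k.factorial : ℝ))) := by
        rw [newton_interp_aux n R hRdeg u]
    _ = ∏ k ∈ Finset.range (n + 1), Real.exp
          (((fwdDiff (1:ℝ))^[k] (fun t : ℝ => R.eval t) 0)
            * ((∏ i ∈ Finset.range k, (u - (i : ℝ))) / (k.factorial : ℝ))) := by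
        rw [Real.exp_sum]
    _ = _ := by
        refine Finset.prod_congr rfl fun k _ => ?_
        have hAlt : ∑ j ∈ Finset.range (k + 1),
            ((-1 : ℝ) ^ j * (k.choose j : ℝ)) * R.eval (((k - j : ℕ) : ℝ))
              = (fwdDiff (1:ℝ))^[k] (fun t : ℝ => R.eval t) 0 := by
          simpa using fwdDiff_alt_aux k (fun t : ℝ => R.eval t)
        rw [hk1 k, hrpow, hAlt]
end
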